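/- Let x, y ∈ ℝⁿ with x ≠ y, let λ > 0 and μ ∈ (0,1), and let u, v ∈ ℝⁿ satisfy λ‖u − v‖ ≤ μ‖x − y‖. Set d = (x − y) − λ(u − v) and ρ = ⟨x − y, d⟩ / ‖d‖². Then d ≠ 0 and ρ ≥ (1 − μ)/(1 + μ)². -/

import Mathlib

/-- Lemma 3.1: With x ≠ y, λ‖u − v‖ ≤ μ‖x − y‖,
d = (x − y) − λ(u − v) and ρ = ⟨x − y, d⟩/‖d‖², one has d ≠ 0 and
ρ ≥ (1 − μ)/(1 + μ)². -/
theorem stmt_4 {n : ℕ} (x y u v : EuclideanSpace ℝ (Fin n))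
    (hxy : x ≠ y)
    (lam μ : ℝ) (hlam : 0 < lam) (hμ0 : 0 < μ) (hμ1 : μ < 1)
    (hls : lam * ‖u - v‖ ≤ μ * ‖x - y‖)
    (d : EuclideanSpace ℝ (Fin n)) (hd : d = (x - y) - lam • (u - v))
    (ρ : ℝ) (hρ : ρ = (inner ℝ (x - y) d : ℝ) / ‖d‖ ^ 2) :
    d ≠ 0 ∧ ρ ≥ (1 - μ) / (1 + μ) ^ 2 := by
  set z := x - y with hz
  set w := lam • (u - v) with hw
  have hzne : z ≠ 0 := sub_ne_zero.mpr hxy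
  have hznorm : 0 < ‖z‖ := norm_pos_iff.mpr hzne
  have hwnorm : ‖w‖ ≤ μ * ‖z‖ := by
    rw [hw, norm_smul, Real.norm_of_nonneg hlam.le]
    exact hls
  -- lower bound on inner product
  have hinner : (inner ℝ z d : ℝ) = ‖z‖ ^ 2 - inner ℝ z w := by
    rw [hd, inner_sub_right, real_inner_self_eq_norm_sq]
  have habs : (inner ℝ z w : ℝ) ≤ μ * ‖z‖ ^ 2 := by
    calc (inner ℝ z w : ℝ) ≤ ‖z‖ * ‖w‖ := real_inner_le_norm z w
    _ ≤ ‖z‖ * (μ * ‖z‖) := by nlinarith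
    _ = μ * ‖z‖ ^ 2 := by ring
  have hlow : (1 - μ) * ‖z‖ ^ 2 ≤ (inner ℝ z d : ℝ) := by
    rw [hinner]; nlinarith
  have h1μ : 0 < 1 - μ := by linarith
  have hinnerpos : 0 < (inner ℝ z d : ℝ) :=
    lt_of_lt_of_le (mul_pos h1μ (pow_pos hznorm 2)) hlow
  have hdne : d ≠ 0 := by
    intro h
    rw [h, inner_zero_right] at hinnerpos
    exact lt_irrefl _ hinnerpos
  have hdpos : 0 < ‖d‖ ^ 2 := pow_pos (norm_pos_iff.mpr hdne) 2
  -- upper bound on ‖d‖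
  have hdnorm : ‖d‖ ≤ (1 + μ) * ‖z‖ := by
    calc ‖d‖ = ‖z - w‖ := by rw [hd]
    _ ≤ ‖z‖ + ‖w‖ := norm_sub_le z w
    _ ≤ ‖z‖ + μ * ‖z‖ := by linarith
    _ = (1 + μ) * ‖z‖ := by ring
  have hdsq : ‖d‖ ^ 2 ≤ (1 + μ) ^ 2 * ‖z‖ ^ 2 := by nlinarith [norm_nonneg d]
  refine ⟨hdne, ?_⟩
  rw [hρ, ge_iff_le, div_le_div_iff₀ (by positivity) hdpos]
  calc (1 - μ) * ‖d‖ ^ 2 ≤ (1 - μ) * ((1 + μ) ^ 2 * ‖z‖ ^ 2) := by nlinarith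
  _ = (1 - μ) * ‖z‖ ^ 2 * (1 + μ) ^ 2 := by ring
  _ ≤ (inner ℝ z d : ℝ) * (1 + μ) ^ 2 := by nlinarith
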